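/- The Brauer operator ρ(η, β) = (1−η−β) I/d² + η V/d + β V^{T_A}/d is local-positive (⟨ψ⊗φ| ρ(η,β) |ψ⊗φ⟩ ≥ 0 for all unit vectors ψ, φ ∈ C^d) if and only if −1/(d−1) ≤ η + β ≤ 1, −(d−1)η + β ≤ 1, and η − (d−1)β ≤ 1. -/

import Mathlib

open Matrix Kronecker BigOperators
open scoped ComplexOrder

/-- The swap operator `V = ∑ i j, |ij⟩⟨ji|` on `C^d ⊗ C^d`. -/
noncomputable def swapOp (d : ℕ) : Matrix (Fin d × Fin d) (Fin d × Fin d) ℂ :=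
  fun p q => if p.1 = q.2 ∧ p.2 = q.1 then 1 else 0

/-- Partial transpose on the first tensor factor. -/
noncomputable def ptransposeA {d : ℕ} (ρ : Matrix (Fin d × Fin d) (Fin d × Fin d) ℂ) :
    Matrix (Fin d × Fin d) (Fin d × Fin d) ℂ :=
  fun p q => ρ (q.1, p.2) (p.1, q.2)

/-- The Brauer operator `ρ(η,β) = (1−η−β) I/d² + η V/d + β V^{T_A}/d`. -/
noncomputable def brauer (d : ℕ) (η β : ℝ) : Matrix (Fin d × Fin d) (Fin d × Fin d) ℂ :=
  ((1 - η - β) / (d : ℝ)^2) • (1 : Matrix (Fin d × Fin d) (Fin d × Fin d) ℂ)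
    + (η / (d : ℝ)) • swapOp d + (β / (d : ℝ)) • ptransposeA (swapOp d)

/-- Local-positivity (block-positivity) of a bipartite operator:
`⟨ψ⊗φ| M |ψ⊗φ⟩ ≥ 0` for all vectors `ψ, φ`. -/
noncomputable def LocalPositive {d : ℕ} (M : Matrix (Fin d × Fin d) (Fin d × Fin d) ℂ) : Prop :=
  ∀ ψ φ : Fin d → ℂ,
    0 ≤ star (fun p : Fin d × Fin d => ψ p.1 * φ p.2) ⬝ᵥ
          M *ᵥ (fun p : Fin d × Fin d => ψ p.1 * φ p.2)

/- ---------- auxiliary lemmas ---------- -/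

lemma dot_one (d : ℕ) (ψ φ : Fin d → ℂ) :
    star (fun p : Fin d × Fin d => ψ p.1 * φ p.2) ⬝ᵥ
      (1 : Matrix (Fin d × Fin d) (Fin d × Fin d) ℂ) *ᵥ (fun p : Fin d × Fin d => ψ p.1 * φ p.2)
    = (∑ i, star (ψ i) * ψ i) * (∑ j, star (φ j) * φ j) := by
  rw [Matrix.one_mulVec, dotProduct, Finset.sum_mul_sum, Fintype.sum_prod_type]
  refine Finset.sum_congr rfl fun i _ => Finset.sum_congr rfl fun j _ => ?_
  simp only [star_mul', Pi.star_apply]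
  ring

lemma dot_swap (d : ℕ) (ψ φ : Fin d → ℂ) :
    star (fun p : Fin d × Fin d => ψ p.1 * φ p.2) ⬝ᵥ
      swapOp d *ᵥ (fun p : Fin d × Fin d => ψ p.1 * φ p.2)
    = (∑ i, star (ψ i) * φ i) * star (∑ j, star (ψ j) * φ j) := by
  have hmv : swapOp d *ᵥ (fun p : Fin d × Fin d => ψ p.1 * φ p.2)
      = fun p : Fin d × Fin d => ψ p.2 * φ p.1 := by
    funext p
    simp only [mulVec, dotProduct, swapOp, Fintype.sum_prod_type, ite_and]
    rw [Finset.sum_comm]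
    simp
  rw [hmv, dotProduct, star_sum]
  rw [Finset.sum_mul_sum, Fintype.sum_prod_type]
  refine Finset.sum_congr rfl fun i _ => Finset.sum_congr rfl fun j _ => ?_
  simp only [star_mul', Pi.star_apply, star_star]
  ring

lemma dot_pt (d : ℕ) (ψ φ : Fin d → ℂ) :
    star (fun p : Fin d × Fin d => ψ p.1 * φ p.2) ⬝ᵥ
      ptransposeA (swapOp d) *ᵥ (fun p : Fin d × Fin d => ψ p.1 * φ p.2)
    = star (∑ i, ψ i * φ i) * (∑ j, ψ j * φ j) := by
  have hmv : ptransposeA (swapOp d) *ᵥ (fun p : Fin d × Fin d => ψ p.1 * φ p.2)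
      = fun p : Fin d × Fin d => if p.1 = p.2 then (∑ j, ψ j * φ j) else 0 := by
    funext p
    simp only [mulVec, dotProduct, ptransposeA, swapOp, Fintype.sum_prod_type, ite_and]
    by_cases h : p.1 = p.2
    · simp [h]
    · simp [h]
      intro hh
      exact absurd hh.symm h
  rw [hmv, dotProduct, Fintype.sum_prod_type]
  simp only [mul_ite, mul_zero, Finset.sum_ite_eq, Finset.mem_univ, if_pos, if_true]
  rw [star_sum, Finset.sum_mul]
  refine Finset.sum_congr rfl fun i _ => ?_
  simp only [star_mul', Pi.star_apply]

lemma quad (d : ℕ) (η β : ℝ) (ψ φ : Fin d → ℂ) :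
    star (fun p : Fin d × Fin d => ψ p.1 * φ p.2) ⬝ᵥ
      brauer d η β *ᵥ (fun p : Fin d × Fin d => ψ p.1 * φ p.2)
    = (((1 - η - β) / (d : ℝ)^2 * ((∑ i, Complex.normSq (ψ i)) * (∑ j, Complex.normSq (φ j)))
        + η / (d : ℝ) * Complex.normSq (∑ i, star (ψ i) * φ i)
        + β / (d : ℝ) * Complex.normSq (∑ i, ψ i * φ i) : ℝ) : ℂ) := by
  have hsz : ∀ z : ℂ, star z * z = (Complex.normSq z : ℂ) := fun z => by
    rw [Complex.star_def, mul_comm, Complex.mul_conj]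
  have hzs : ∀ z : ℂ, z * star z = (Complex.normSq z : ℂ) := fun z => by
    rw [Complex.star_def, Complex.mul_conj]
  unfold brauer
  rw [Matrix.add_mulVec, Matrix.add_mulVec, Matrix.smul_mulVec,
      Matrix.smul_mulVec, Matrix.smul_mulVec,
      dotProduct_add, dotProduct_add, dotProduct_smul, dotProduct_smul, dotProduct_smul,
      dot_one, dot_swap, dot_pt]
  rw [hzs (∑ i, star (ψ i) * φ i), hsz (∑ i, ψ i * φ i)]
  simp only [hsz, smul_eq_mul, Complex.real_smul]
  push_cast
  ring

lemma sum_pair {M : Type*} [AddCommMonoid M] {d : ℕ} {i0 i1 : Fin d} (h : i0 ≠ i1)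
    (f : Fin d → M) (hf : ∀ k, k ≠ i0 → k ≠ i1 → f k = 0) :
    ∑ i, f i = f i0 + f i1 :=
  Finset.sum_eq_add i0 i1 h (fun c _ hcn => hf c hcn.1 hcn.2)
    (fun hni => absurd (Finset.mem_univ i0) hni) (fun hnj => absurd (Finset.mem_univ i1) hnj)

/-- basis vector -/
noncomputable def eV {d : ℕ} (k : Fin d) : Fin d → ℂ := fun i => if i = k then 1 else 0

/-- two-entry vector `(1, c, 0, …)` -/
noncomputable def uV {d : ℕ} (i0 i1 : Fin d) (c : ℂ) : Fin d → ℂ :=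
  fun i => if i = i0 then 1 else if i = i1 then c else 0

lemma eV_normSq_sum {d : ℕ} (k : Fin d) : ∑ i, Complex.normSq (eV k i) = 1 := by
  rw [Finset.sum_eq_single_of_mem k (Finset.mem_univ _) (fun b _ hb => by simp [eV, hb])]
  simp [eV]

lemma eV_conj_sum {d : ℕ} {k l : Fin d} (h : k ≠ l) : ∑ i, star (eV k i) * eV l i = 0 :=
  Finset.sum_eq_zero fun i _ => by
    by_cases h0 : i = k <;> by_cases h1 : i = l <;> simp_all [eV]

lemma eV_mul_sum {d : ℕ} {k l : Fin d} (h : k ≠ l) : ∑ i, eV k i * eV l i = 0 :=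
  Finset.sum_eq_zero fun i _ => by
    by_cases h0 : i = k <;> by_cases h1 : i = l <;> simp_all [eV]

lemma eV_conj_sum_self {d : ℕ} (k : Fin d) : ∑ i, star (eV k i) * eV k i = 1 := by
  rw [Finset.sum_eq_single_of_mem k (Finset.mem_univ _) (fun b _ hb => by simp [eV, hb])]
  simp [eV]

lemma eV_mul_sum_self {d : ℕ} (k : Fin d) : ∑ i, eV k i * eV k i = 1 := by
  rw [Finset.sum_eq_single_of_mem k (Finset.mem_univ _) (fun b _ hb => by simp [eV, hb])]
  simp [eV]

lemma uV_normSq_sum {d : ℕ} {i0 i1 : Fin d} (h : i0 ≠ i1) (c : ℂ) :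
    ∑ i, Complex.normSq (uV i0 i1 c i) = 1 + Complex.normSq c := by
  rw [sum_pair h _ (fun k hk0 hk1 => by simp [uV, hk0, hk1])]
  simp [uV, h, h.symm]

lemma uV_conj_sum {d : ℕ} {i0 i1 : Fin d} (h : i0 ≠ i1) (c c' : ℂ) :
    ∑ i, star (uV i0 i1 c i) * uV i0 i1 c' i = 1 + star c * c' := by
  rw [sum_pair h _ (fun k hk0 hk1 => by simp [uV, hk0, hk1])]
  simp [uV, h, h.symm]

lemma uV_mul_sum {d : ℕ} {i0 i1 : Fin d} (h : i0 ≠ i1) (c c' : ℂ) :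
    ∑ i, uV i0 i1 c i * uV i0 i1 c' i = 1 + c * c' := by
  rw [sum_pair h _ (fun k hk0 hk1 => by simp [uV, hk0, hk1])]
  simp [uV, h, h.symm]

lemma corner_bound (A B C P s t : ℝ) (hA0 : 0 ≤ A) (hAB : 0 ≤ A + B) (hAC : 0 ≤ A + C)
    (hABC : 0 ≤ A + B + C) (hs0 : 0 ≤ s) (ht0 : 0 ≤ t) (hsP : s ≤ P) (htP : t ≤ P)
    (hP0 : 0 ≤ P) : 0 ≤ A * P + B * s + C * t := by
  by_cases hP : P = 0
  · have hse : s = 0 := le_antisymm (hP ▸ hsP) hs0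
    have hte : t = 0 := le_antisymm (hP ▸ htP) ht0
    rw [hP, hse, hte]
    norm_num
  · have hPpos : 0 < P := lt_of_le_of_ne hP0 (Ne.symm hP)
    have key : 0 ≤ P * (A * P + B * s + C * t) := by
      have iden : P * (A * P + B * s + C * t)
          = A*(P-s)*(P-t) + (A+B)*(s*(P-t)) + (A+C)*(t*(P-s)) + (A+B+C)*(s*t) := by ring
      rw [iden]
      have t1 : 0 ≤ A*(P-s)*(P-t) :=
        mul_nonneg (mul_nonneg hA0 (sub_nonneg.mpr hsP)) (sub_nonneg.mpr htP)
      have t2 : 0 ≤ (A+B)*(s*(P-t)) := mul_nonneg hAB (mul_nonneg hs0 (sub_nonneg.mpr htP))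
      have t3 : 0 ≤ (A+C)*(t*(P-s)) := mul_nonneg hAC (mul_nonneg ht0 (sub_nonneg.mpr hsP))
      have t4 : 0 ≤ (A+B+C)*(s*t) := mul_nonneg hABC (mul_nonneg hs0 ht0)
      linarith
    exact le_of_mul_le_mul_left (by simpa using key) hPpos

theorem stmt7 (d : ℕ) (hd : 2 ≤ d) (η β : ℝ) :
    LocalPositive (brauer d η β) ↔
      (-1 / ((d : ℝ) - 1) ≤ η + β ∧ η + β ≤ 1) ∧
      -((d : ℝ) - 1) * η + β ≤ 1 ∧
      η - ((d : ℝ) - 1) * β ≤ 1 := by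
  have hd2 : (2:ℝ) ≤ (d:ℝ) := by exact_mod_cast hd
  have hdpos : (0:ℝ) < (d:ℝ) := by linarith
  have hD2 : (0:ℝ) < (d:ℝ)^2 := by positivity
  have hd1 : (0:ℝ) < (d:ℝ) - 1 := by linarith
  have hdiv : ∀ x : ℝ, 0 ≤ x / (d:ℝ)^2 → 0 ≤ x := by
    intro x hx
    rcases div_nonneg_iff.mp hx with ⟨h1, _⟩ | ⟨_, h2⟩
    · exact h1
    · nlinarith
  have hLP : LocalPositive (brauer d η β) ↔ ∀ ψ φ : Fin d → ℂ,
      0 ≤ (1 - η - β) / (d : ℝ)^2 * ((∑ i, Complex.normSq (ψ i)) * (∑ j, Complex.normSq (φ j)))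
        + η / (d : ℝ) * Complex.normSq (∑ i, star (ψ i) * φ i)
        + β / (d : ℝ) * Complex.normSq (∑ i, ψ i * φ i) := by
    unfold LocalPositive
    constructor
    · intro h ψ φ
      have := h ψ φ
      rw [quad] at this
      exact_mod_cast this
    · intro h ψ φ
      rw [quad]
      exact_mod_cast h ψ φ
  rw [hLP]
  constructor
  · -- forward
    intro h
    have hne : (⟨0, by omega⟩ : Fin d) ≠ (⟨1, by omega⟩ : Fin d) := by
      simp [Fin.ext_iff]
    set i0 : Fin d := ⟨0, by omega⟩
    set i1 : Fin d := ⟨1, by omega⟩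
    -- corner (0,0)
    have c1 := h (eV i0) (eV i1)
    rw [eV_normSq_sum, eV_normSq_sum, eV_conj_sum hne, eV_mul_sum hne] at c1
    simp only [map_zero, mul_zero, add_zero, mul_one] at c1
    have k1 : 0 ≤ 1 - η - β := hdiv _ c1
    -- corner (1,1)
    have c2 := h (eV i0) (eV i0)
    rw [eV_normSq_sum, eV_conj_sum_self, eV_mul_sum_self] at c2
    simp only [Complex.normSq_one, mul_one] at c2
    have c2' : 0 ≤ 1 - η - β + (d:ℝ)*η + (d:ℝ)*β := by
      apply hdiv
      have heq : (1 - η - β) / (d:ℝ)^2 + η/(d:ℝ) + β/(d:ℝ)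
          = (1 - η - β + (d:ℝ)*η + (d:ℝ)*β) / (d:ℝ)^2 := by
        field_simp
      linarith [heq.le, heq.symm.le]
    -- corner (1,0) : s = 4, t = 0
    have c3 := h (uV i0 i1 Complex.I) (uV i0 i1 Complex.I)
    rw [uV_normSq_sum hne, uV_conj_sum hne, uV_mul_sum hne] at c3
    have e1 : (1 : ℂ) + star Complex.I * Complex.I = 2 := by
      rw [Complex.star_def, Complex.conj_I]
      simp [Complex.I_mul_I]
      ring
    have e2 : (1 : ℂ) + Complex.I * Complex.I = 0 := by
      rw [Complex.I_mul_I]; ring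
    rw [e1, e2] at c3
    have hn2 : Complex.normSq 2 = 4 := by
      simp [Complex.normSq_apply]
      norm_num
    rw [hn2] at c3
    simp only [map_zero, mul_zero, add_zero, Complex.normSq_I] at c3
    norm_num at c3
    have c3' : 0 ≤ 4*(1 - η - β) + 4*(d:ℝ)*η := by
      apply hdiv
      have heq : (1 - η - β) / (d:ℝ)^2 * (2*2) + η/(d:ℝ) * 4
          = (4*(1 - η - β) + 4*(d:ℝ)*η) / (d:ℝ)^2 := by
        field_simp
        ring
      linarith [heq.le, heq.symm.le]
    -- corner (0,1) : s = 0, t = 4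
    have c4 := h (uV i0 i1 Complex.I) (uV i0 i1 (-Complex.I))
    rw [uV_normSq_sum hne, uV_normSq_sum hne, uV_conj_sum hne, uV_mul_sum hne] at c4
    have e3 : (1 : ℂ) + star Complex.I * -Complex.I = 0 := by
      rw [Complex.star_def, Complex.conj_I]
      simp [Complex.I_mul_I]
    have e4 : (1 : ℂ) + Complex.I * -Complex.I = 2 := by
      simp [Complex.I_mul_I]
      ring
    rw [e3, e4, hn2] at c4
    simp only [map_zero, mul_zero, add_zero, Complex.normSq_I, Complex.normSq_neg] at c4
    norm_num at c4
    have c4' : 0 ≤ 4*(1 - η - β) + 4*(d:ℝ)*β := by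
      apply hdiv
      have heq : (1 - η - β) / (d:ℝ)^2 * (2*2) + β/(d:ℝ) * 4
          = (4*(1 - η - β) + 4*(d:ℝ)*β) / (d:ℝ)^2 := by
        field_simp
        ring
      linarith [heq.le, heq.symm.le]
    refine ⟨⟨?_, by linarith⟩, by nlinarith, by nlinarith⟩
    rw [div_le_iff₀ hd1]
    nlinarith
  · -- backward
    rintro ⟨⟨hlow, hup⟩, h3, h4⟩ ψ φ
    have ha0 : 0 ≤ ∑ i, Complex.normSq (ψ i) :=
      Finset.sum_nonneg fun i _ => Complex.normSq_nonneg _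
    have hb0 : 0 ≤ ∑ i, Complex.normSq (φ i) :=
      Finset.sum_nonneg fun i _ => Complex.normSq_nonneg _
    have hCS : ∀ z : Fin d → ℂ, (∀ i, ‖z i‖ = ‖ψ i‖) →
        Complex.normSq (∑ i, z i * φ i)
          ≤ (∑ i, Complex.normSq (ψ i)) * (∑ i, Complex.normSq (φ i)) := by
      intro z hz
      have habs : ‖∑ i, z i * φ i‖
          ≤ ∑ i, ‖ψ i‖ * ‖φ i‖ := by
        refine le_trans (norm_sum_le _ _) (le_of_eq ?_)
        exact Finset.sum_congr rfl fun i _ => by rw [norm_mul, hz i]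
      have h1 : Complex.normSq (∑ i, z i * φ i) = (‖∑ i, z i * φ i‖)^2 :=
        (Complex.sq_norm _).symm
      have h2 : (∑ i, ‖ψ i‖ * ‖φ i‖)^2
          ≤ (∑ i, (‖ψ i‖)^2) * (∑ i, (‖φ i‖)^2) :=
        Finset.sum_mul_sq_le_sq_mul_sq _ _ _
      have h3a : (∑ i, (‖ψ i‖)^2) = ∑ i, Complex.normSq (ψ i) :=
        Finset.sum_congr rfl fun i _ => Complex.sq_norm _
      have h3b : (∑ i, (‖φ i‖)^2) = ∑ i, Complex.normSq (φ i) :=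
        Finset.sum_congr rfl fun i _ => Complex.sq_norm _
      rw [h1]
      calc (‖∑ i, z i * φ i‖)^2
          ≤ (∑ i, ‖ψ i‖ * ‖φ i‖)^2 := by
            apply pow_le_pow_left₀ (norm_nonneg _) habs
        _ ≤ (∑ i, Complex.normSq (ψ i)) * (∑ i, Complex.normSq (φ i)) := by
            rw [← h3a, ← h3b]; exact h2
    have hsab : Complex.normSq (∑ i, star (ψ i) * φ i)
        ≤ (∑ i, Complex.normSq (ψ i)) * (∑ i, Complex.normSq (φ i)) :=
      hCS (fun i => star (ψ i)) (fun i => by rw [Complex.star_def, Complex.norm_conj])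
    have htab : Complex.normSq (∑ i, ψ i * φ i)
        ≤ (∑ i, Complex.normSq (ψ i)) * (∑ i, Complex.normSq (φ i)) :=
      hCS ψ (fun i => rfl)
    have hA0 : 0 ≤ (1 - η - β) / (d:ℝ)^2 := div_nonneg (by linarith) (le_of_lt hD2)
    have hAB : 0 ≤ (1 - η - β) / (d:ℝ)^2 + η / (d:ℝ) := by
      have heq : (1 - η - β) / (d:ℝ)^2 + η / (d:ℝ)
          = (1 + ((d:ℝ)-1)*η - β) / (d:ℝ)^2 := by field_simp; ring
      rw [heq]
      apply div_nonneg _ (le_of_lt hD2)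
      nlinarith [h3]
    have hAC : 0 ≤ (1 - η - β) / (d:ℝ)^2 + β / (d:ℝ) := by
      have heq : (1 - η - β) / (d:ℝ)^2 + β / (d:ℝ)
          = (1 + ((d:ℝ)-1)*β - η) / (d:ℝ)^2 := by field_simp; ring
      rw [heq]
      apply div_nonneg _ (le_of_lt hD2)
      nlinarith [h4]
    have hABC : 0 ≤ (1 - η - β) / (d:ℝ)^2 + η / (d:ℝ) + β / (d:ℝ) := by
      have hlow' : -1 ≤ (η + β) * ((d:ℝ)-1) := by
        rw [← div_le_iff₀ hd1]
        exact hlow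
      have heq : (1 - η - β) / (d:ℝ)^2 + η / (d:ℝ) + β / (d:ℝ)
          = (1 + ((d:ℝ)-1)*(η+β)) / (d:ℝ)^2 := by field_simp; ring
      rw [heq]
      apply div_nonneg _ (le_of_lt hD2)
      have hcomm : (η + β) * ((d:ℝ)-1) = ((d:ℝ)-1)*(η+β) := mul_comm _ _
      linarith
    exact corner_bound _ _ _ _ _ _ hA0 hAB hAC hABC (Complex.normSq_nonneg _)
      (Complex.normSq_nonneg _) hsab htab (mul_nonneg ha0 hb0)
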